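/- Let E be a real inner product space and let v, a, b ∈ E with a ≠ v and b ≠ v. If the angle ∠(a, v, b) at the vertex v is strictly less than 2π/3, then there exists a point p ∈ E with dist(v,p) + dist(p,a) + dist(p,b) < dist(v,a) + dist(v,b). -/

import Mathlib

open Real

lemma stmt_8_aux_normsq {E : Type*} [NormedAddCommGroup E] [InnerProductSpace ℝ E]
    (x y : E) (s t : ℝ) :
    ‖s • x - t • y‖ ^ 2
      = s ^ 2 * ‖x‖ ^ 2 - 2 * s * t * (inner ℝ x y : ℝ) + t ^ 2 * ‖y‖ ^ 2 := by
  rw [← real_inner_self_eq_norm_sq]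
  simp only [inner_sub_left, inner_sub_right, real_inner_smul_left, real_inner_smul_right,
    real_inner_self_eq_norm_sq, real_inner_comm x y, norm_smul, mul_pow]
  simp [sq_abs]
  ring

lemma stmt_8_aux_norm_le {E : Type*} [NormedAddCommGroup E] [InnerProductSpace ℝ E]
    (w : E) (s : ℝ) (hs : 0 < s) : ‖w‖ ≤ (‖w‖ ^ 2 + s ^ 2) / (2 * s) := by
  rw [le_div_iff₀ (by positivity)]
  nlinarith [sq_nonneg (‖w‖ - s)]

/-- In a real inner product space, if the angle `∠ a v b` at the vertex `v` is
strictly less than `2π/3` (with `a ≠ v` and `b ≠ v`), then there is a point `p`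
with `dist v p + dist p a + dist p b < dist v a + dist v b`. -/
theorem stmt_8 {E : Type*} [NormedAddCommGroup E] [InnerProductSpace ℝ E]
    (v a b : E) (ha : a ≠ v) (hb : b ≠ v)
    (hangle : EuclideanGeometry.angle a v b < 2 * π / 3) :
    ∃ p : E, dist v p + dist p a + dist p b < dist v a + dist v b := by
  have hav0 : a - v ≠ 0 := sub_ne_zero.mpr ha
  have hbv0 : b - v ≠ 0 := sub_ne_zero.mpr hb
  set na : ℝ := ‖a - v‖ with hna_def
  set nb : ℝ := ‖b - v‖ with hnb_def
  have hna : 0 < na := norm_pos_iff.mpr hav0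
  have hnb : 0 < nb := norm_pos_iff.mpr hbv0
  set ua : E := na⁻¹ • (a - v) with hua_def
  set ub : E := nb⁻¹ • (b - v) with hub_def
  have hua1 : ‖ua‖ = 1 := norm_smul_inv_norm hav0
  have hub1 : ‖ub‖ = 1 := norm_smul_inv_norm hbv0
  have hav : a - v = na • ua := by
    rw [hua_def, smul_smul, mul_inv_cancel₀ hna.ne', one_smul]
  have hbv : b - v = nb • ub := by
    rw [hub_def, smul_smul, mul_inv_cancel₀ hnb.ne', one_smul]
  set K : ℝ := (inner ℝ ua ub : ℝ) with hK_def
  -- K = cos of the angle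
  have hangle_eq : EuclideanGeometry.angle a v b = InnerProductGeometry.angle (a - v) (b - v) := by
    simp [EuclideanGeometry.angle, vsub_eq_sub]
  have hcosK : Real.cos (EuclideanGeometry.angle a v b) = K := by
    rw [hangle_eq, InnerProductGeometry.cos_angle, hK_def, hua_def, hub_def,
      real_inner_smul_left, real_inner_smul_right]
    field_simp
    rfl
  have h23pi : 2 * π / 3 ≤ π := by linarith [pi_pos]
  have hcoslt : Real.cos (2 * π / 3) < Real.cos (EuclideanGeometry.angle a v b) :=
    Real.cos_lt_cos_of_nonneg_of_le_pi
      (by rw [hangle_eq]; exact InnerProductGeometry.angle_nonneg _ _) h23pi hangle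
  have hcos23 : Real.cos (2 * π / 3) = -(1/2) := by
    have : (2 : ℝ) * π / 3 = π - π / 3 := by ring
    rw [this, Real.cos_pi_sub, Real.cos_pi_div_three]
  have hK : -(1/2) < K := by rw [hcos23, hcosK] at hcoslt; exact hcoslt
  have hk : (0 : ℝ) < 1 + K := by linarith
  set c : ℝ := ‖ua + ub‖ with hc_def
  have hc2 : c ^ 2 = 2 + 2 * K := by
    rw [hc_def, norm_add_sq_real, hua1, hub1, ← hK_def]; ring
  have hc0 : 0 ≤ c := norm_nonneg _
  have hc1 : 1 < c := by nlinarith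
  have hδ : c < 2 * (1 + K) := by nlinarith
  set δ : ℝ := 2 * (1 + K) - c with hδ_def
  have hδ0 : 0 < δ := by rw [hδ_def]; linarith
  set C : ℝ := (1 + K) * (1 / na + 1 / nb) with hC_def
  have hC0 : 0 < C := by
    apply mul_pos hk
    positivity
  set t : ℝ := δ / (2 * C) with ht_def
  have ht : 0 < t := div_pos hδ0 (by positivity)
  refine ⟨v + t • (ua + ub), ?_⟩
  -- dist v p
  have hdvp : dist v (v + t • (ua + ub)) = t * c := by
    rw [dist_eq_norm]
    simp only [sub_add_cancel_left, norm_neg, norm_smul, Real.norm_eq_abs,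
      abs_of_pos ht, hc_def]
  -- dist p a
  have hpa : (v + t • (ua + ub)) - a = -((na - t) • ua - t • ub) := by
    have haeq : a = v + na • ua := by rw [← hav]; abel
    rw [haeq]; module
  have hXa : ‖(na - t) • ua - t • ub‖ ^ 2
      = na ^ 2 - 2 * na * t * (1 + K) + 2 * t ^ 2 * (1 + K) := by
    rw [stmt_8_aux_normsq, hua1, hub1, ← hK_def]; ring
  have hdpa : dist (v + t • (ua + ub)) a ≤ na - (1 + K) * t + (1 + K) * t ^ 2 / na := by
    rw [dist_eq_norm, hpa, norm_neg]
    have h1 := stmt_8_aux_norm_le ((na - t) • ua - t • ub) na hna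
    rw [hXa] at h1
    have h2 : (na ^ 2 - 2 * na * t * (1 + K) + 2 * t ^ 2 * (1 + K) + na ^ 2) / (2 * na)
        = na - (1 + K) * t + (1 + K) * t ^ 2 / na := by
      field_simp
      ring
    linarith [h1, h2.le, h2.ge]
  -- dist p b
  have hpb : (v + t • (ua + ub)) - b = -((nb - t) • ub - t • ua) := by
    have hbeq : b = v + nb • ub := by rw [← hbv]; abel
    rw [hbeq]; module
  have hXb : ‖(nb - t) • ub - t • ua‖ ^ 2
      = nb ^ 2 - 2 * nb * t * (1 + K) + 2 * t ^ 2 * (1 + K) := by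
    rw [stmt_8_aux_normsq, hua1, hub1, real_inner_comm, ← hK_def]; ring
  have hdpb : dist (v + t • (ua + ub)) b ≤ nb - (1 + K) * t + (1 + K) * t ^ 2 / nb := by
    rw [dist_eq_norm, hpb, norm_neg]
    have h1 := stmt_8_aux_norm_le ((nb - t) • ub - t • ua) nb hnb
    rw [hXb] at h1
    have h2 : (nb ^ 2 - 2 * nb * t * (1 + K) + 2 * t ^ 2 * (1 + K) + nb ^ 2) / (2 * nb)
        = nb - (1 + K) * t + (1 + K) * t ^ 2 / nb := by
      field_simp
      ring
    linarith [h1, h2.le, h2.ge]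
  -- final arithmetic
  have hdva : dist v a = na := by rw [dist_eq_norm, norm_sub_rev]
  have hdvb : dist v b = nb := by rw [dist_eq_norm, norm_sub_rev]
  rw [hdvp, hdva, hdvb]
  have hquad : (1 + K) * t ^ 2 / na + (1 + K) * t ^ 2 / nb = t * (t * C) := by
    rw [hC_def]; field_simp
  have htC : t * C = δ / 2 := by
    rw [ht_def]; field_simp
  have htc : t * c = 2 * (1 + K) * t - t * δ := by rw [hδ_def]; ring
  have htδ : 0 < t * δ := mul_pos ht hδ0
  calc t * c + dist (v + t • (ua + ub)) a + dist (v + t • (ua + ub)) b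
      ≤ t * c + (na - (1 + K) * t + (1 + K) * t ^ 2 / na)
        + (nb - (1 + K) * t + (1 + K) * t ^ 2 / nb) := by linarith
    _ = na + nb + (t * c - 2 * (1 + K) * t + t * (t * C)) := by linarith [hquad]
    _ = na + nb - t * δ / 2 := by rw [htC, htc]; ring
    _ < na + nb := by linarith
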